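/- Let p be a prime and ζ a primitive p-th root of unity in a ring of characteristic zero containing ℤ[ζ]. Then the sum S(n) = Σ_{i=0}^{p−1} (ζⁱ − 1)ⁿ ζⁱ satisfies: S(n) = 0 for n = 0, 1, …, p−2; S(p−1) = p; and S(n) is divisible by p² in ℤ[ζ] ∩ ℤ (i.e., p² divides the integer S(n)) for all n ≥ p. -/

import Mathlib

open Finset

set_option linter.unusedSectionVars false

private lemma int_dvd_aux (p : ℕ) (hp : p.Prime) (n : ℕ) (hn : p ≤ n) :
    (p : ℤ) ∣ ∑ k ∈ range (n + 1),
      (if p ∣ k + 1 then (-1 : ℤ) ^ (k + n) * (n.choose k : ℤ) else 0) := by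
  haveI : Fact p.Prime := ⟨hp⟩
  rw [← ZMod.intCast_zmod_eq_zero_iff_dvd]
  push_cast
  let A := AddMonoidAlgebra (ZMod p) (ZMod p)
  haveI : CharP A p := charP_of_injective_ringHom
    (R := ZMod p) (f := AddMonoidAlgebra.singleZeroRingHom)
    (AddMonoidAlgebra.single_right_injective (m := (0 : ZMod p))) p
  let g : A := AddMonoidAlgebra.single (1 : ZMod p) 1
  have hgk : ∀ k : ℕ, g ^ k = AddMonoidAlgebra.single ((k : ZMod p)) 1 := by
    intro k
    rw [AddMonoidAlgebra.single_pow]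
    simp
  have hgp : (g - 1) ^ p = 0 := by
    rw [sub_pow_char, hgk, one_pow]
    simp [← AddMonoidAlgebra.one_def]
  have hzero : (g - 1) ^ n = 0 := by
    calc (g - 1) ^ n = (g - 1) ^ p * (g - 1) ^ (n - p) := by
          rw [← pow_add, Nat.add_sub_cancel' hn]
      _ = 0 := by rw [hgp, zero_mul]
  rw [sub_pow] at hzero
  have hneg : ∀ m : ℕ, (-1 : A) ^ m = AddMonoidAlgebra.single (0 : ZMod p) ((-1) ^ m) := by
    intro m
    have h1 : (-1 : A) = AddMonoidAlgebra.single (0 : ZMod p) (-1) := by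
      have : (-1 : A) = ((-1 : ℤ) : A) := by push_cast; ring
      rw [this, AddMonoidAlgebra.intCast_def]
      norm_num
    rw [h1, AddMonoidAlgebra.single_pow]
    simp
  have hterm : ∀ k : ℕ, (-1 : A) ^ (k + n) * g ^ k * 1 ^ (n - k) * (n.choose k : A)
      = AddMonoidAlgebra.single ((k : ZMod p)) ((-1) ^ (k + n) * (n.choose k : ZMod p)) := by
    intro k
    rw [hgk, one_pow, mul_one, hneg, AddMonoidAlgebra.natCast_def,
      AddMonoidAlgebra.single_mul_single, AddMonoidAlgebra.single_mul_single]
    simp [mul_comm]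
  rw [Finset.sum_congr rfl (fun k _ => hterm k)] at hzero
  have h2 := congrArg ((Finsupp.applyAddHom (-1 : ZMod p)).comp
    (AddMonoidAlgebra.coeffAddEquiv (R := ZMod p) (M := ZMod p)).toAddMonoidHom) hzero
  rw [map_sum, map_zero] at h2
  simp only [AddMonoidHom.coe_comp, Function.comp_apply, AddEquiv.coe_toAddMonoidHom,
    AddMonoidAlgebra.coeffAddEquiv_apply, AddMonoidAlgebra.coeff_single,
    Finsupp.applyAddHom_apply, Finsupp.single_apply] at h2
  rw [← h2]
  apply Finset.sum_congr rfl
  intro k _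
  congr 1
  rw [eq_comm, eq_neg_iff_add_eq_zero (G := ZMod p)]
  rw [show (k : ZMod p) + 1 = ((k + 1 : ℕ) : ZMod p) by push_cast; ring,
    ZMod.natCast_eq_zero_iff]

section
variable {R : Type*} [CommRing R] [IsDomain R] [CharZero R]
  {p : ℕ} {ζ : R}

private lemma geom_aux (hp : p.Prime) (hζ : IsPrimitiveRoot ζ p) (m : ℕ) :
    ∑ i ∈ range p, (ζ ^ m) ^ i = if p ∣ m then (p : R) else 0 := by
  by_cases h : p ∣ m
  · obtain ⟨c, rfl⟩ := h
    rw [pow_mul, hζ.pow_eq_one, one_pow]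
    simp
  · rw [if_neg h]
    have hc : Nat.Coprime m p := (Nat.coprime_comm.mp ((hp.coprime_iff_not_dvd).mpr h))
    exact (hζ.pow_of_coprime m hc).geom_sum_eq_zero hp.one_lt

private lemma expand_aux (hp : p.Prime) (hζ : IsPrimitiveRoot ζ p) (n : ℕ) :
    ∑ i ∈ range p, (ζ ^ i - 1) ^ n * ζ ^ i
      = ∑ k ∈ range (n + 1),
          (if p ∣ k + 1 then (-1 : R) ^ (k + n) * (n.choose k) * p else 0) := by
  have h1 : ∀ i, (ζ ^ i - 1) ^ n * ζ ^ i
      = ∑ k ∈ range (n + 1), (-1) ^ (k + n) * (ζ ^ (k + 1)) ^ i * (n.choose k : R) := by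
    intro i
    rw [sub_pow, Finset.sum_mul]
    refine Finset.sum_congr rfl fun k _ => ?_
    have h2 : (ζ ^ i) ^ k * ζ ^ i = (ζ ^ (k + 1)) ^ i := by
      rw [← pow_mul, ← pow_add, ← Nat.mul_succ, mul_comm i (k + 1), pow_mul]
    rw [one_pow, mul_one]
    rw [show (-1 : R) ^ (k + n) * (ζ ^ i) ^ k * (n.choose k : R) * ζ ^ i
        = (-1) ^ (k + n) * ((ζ ^ i) ^ k * ζ ^ i) * (n.choose k : R) by ring, h2]
  rw [Finset.sum_congr rfl fun i _ => h1 i, Finset.sum_comm]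
  refine Finset.sum_congr rfl fun k _ => ?_
  have : ∑ i ∈ range p, (-1 : R) ^ (k + n) * (ζ ^ (k + 1)) ^ i * (n.choose k : R)
      = (-1) ^ (k + n) * (n.choose k : R) * ∑ i ∈ range p, (ζ ^ (k + 1)) ^ i := by
    rw [Finset.mul_sum]
    exact Finset.sum_congr rfl fun i _ => by ring
  rw [this, geom_aux hp hζ, mul_ite, mul_zero]

end

/-- For `ζ` a primitive `p`-th root of unity in a characteristic-zero domain,
the sums `S(n) = Σ_{i=0}^{p−1} (ζⁱ − 1)ⁿ ζⁱ` satisfy `S(n) = 0` for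
`n = 0, …, p−2`, `S(p−1) = p`, and for `n ≥ p`, `S(n)` is an integer divisible
by `p²`. -/
theorem primitiveRoot_sum_pow
    (R : Type*) [CommRing R] [IsDomain R] [CharZero R]
    (p : ℕ) (hp : p.Prime) (ζ : R) (hζ : IsPrimitiveRoot ζ p) :
    (∀ n : ℕ, n ≤ p - 2 →
        ∑ i ∈ range p, (ζ ^ i - 1) ^ n * ζ ^ i = 0) ∧
    (∑ i ∈ range p, (ζ ^ i - 1) ^ (p - 1) * ζ ^ i = (p : R)) ∧
    (∀ n : ℕ, p ≤ n →
        ∃ m : ℤ, ∑ i ∈ range p, (ζ ^ i - 1) ^ n * ζ ^ i = ((p : ℤ) ^ 2 * m : ℤ)) := by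
  have h2 := hp.two_le
  refine ⟨?_, ?_, ?_⟩
  · intro n hn
    rw [expand_aux hp hζ]
    apply Finset.sum_eq_zero
    intro k hk
    rw [mem_range] at hk
    rw [if_neg]
    intro hdvd
    have := Nat.le_of_dvd (by omega) hdvd
    omega
  · rw [expand_aux hp hζ]
    rw [Finset.sum_eq_single (p - 1)]
    · rw [if_pos (show p ∣ p - 1 + 1 by rw [Nat.sub_add_cancel (by omega : 1 ≤ p)])]
      rw [Nat.choose_self, Nat.cast_one, mul_one]
      have : (-1 : R) ^ (p - 1 + (p - 1)) = 1 := Even.neg_one_pow ⟨p - 1, rfl⟩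
      rw [this, one_mul]
    · intro k hk hne
      rw [mem_range] at hk
      rw [if_neg]
      intro hdvd
      have := Nat.le_of_dvd (by omega) hdvd
      omega
    · intro h
      rw [mem_range] at h
      omega
  · intro n hn
    obtain ⟨m, hm⟩ := int_dvd_aux p hp n hn
    refine ⟨m, ?_⟩
    rw [expand_aux hp hζ]
    have : ∀ k : ℕ, (if p ∣ k + 1 then (-1 : R) ^ (k + n) * (n.choose k) * p else 0)
        = (((if p ∣ k + 1 then (-1 : ℤ) ^ (k + n) * (n.choose k : ℤ) else 0) : ℤ) : R) * p := by
      intro k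
      split <;> push_cast <;> ring
    rw [Finset.sum_congr rfl fun k _ => this k, ← Finset.sum_mul, ← Int.cast_sum, hm]
    push_cast
    ring
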